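/- Let F be a field of characteristic p > 0, π = ⟪a₁,…,aₙ⟫ a quasi-Pfister form over F, t ≥ 1, s₁,…,s_t ∈ D_F(π), σ = ⟨s₁,…,s_t⟩, and d ∈ F* such that φ = π ⊥ dσ is anisotropic over F. Let E/F be a field extension with d ∉ D_E(π). Then i_d(φ_E) = i_d(π_E) + i_d(σ_E); equivalently, dim(φ_E)_an = dim(π_E)_an + dim(σ_E)_an. -/

import Mathlib

open scoped BigOperators

set_option synthInstance.maxHeartbeats 1000000
set_option maxHeartbeats 1000000

/-- The subfield `F^p` of `p`-th powers of `F` (generated as a subfield). -/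
def pPow (p : ℕ) (F : Type*) [Field F] : Subfield F :=
  Subfield.closure (Set.range fun x : F => x ^ p)

/-- The degree `[F^p(S) : F^p]`. -/
noncomputable def pDeg (p : ℕ) {F : Type*} [Field F] (S : Set F) : ℕ :=
  Module.finrank ↥(pPow p F) ↥(IntermediateField.adjoin ↥(pPow p F) S)

/-- A finite family `a : ι → F` is `p`-independent over `F` if
`[F^p(a i, i : ι) : F^p] = p ^ #ι`. -/
def pIndep (p : ℕ) {F : Type*} [Field F] {ι : Type*} [Fintype ι] (a : ι → F) : Prop :=
  pDeg p (Set.range a) = p ^ Fintype.card ι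

/-- The defect `i_d(φ_E)` of the diagonal quasilinear `p`-form with coefficients `a` over `E`:
the `E`-dimension of its zero set (an `E`-subspace in characteristic `p`). -/
noncomputable def defect (p : ℕ) (E : Type*) [Field E] {ι : Type*} [Fintype ι] (a : ι → E) : ℕ :=
  Module.finrank E ↥(Submodule.span E {x : ι → E | ∑ i, a i * x i ^ p = 0})

/-- A diagonal quasilinear `p`-form is anisotropic over `E`. -/
def Anisotropic (p : ℕ) (E : Type*) [Field E] {ι : Type*} [Fintype ι] (a : ι → E) : Prop :=
  ∀ x : ι → E, ∑ i, a i * x i ^ p = 0 → x = 0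

/-- The value set `D_E(φ)` of a diagonal quasilinear `p`-form. -/
def valueSet (p : ℕ) (E : Type*) [Field E] {ι : Type*} [Fintype ι] (a : ι → E) : Set E :=
  {y | ∃ x : ι → E, y = ∑ i, a i * x i ^ p}
universe u v

section Aux

universe w

variable (p : ℕ) [Fact p.Prime]

/-- Type synonym: `E` with the Frobenius-twisted `E`-module structure. -/
def Tw (p : ℕ) (E : Type w) : Type w := E

/-- Wrap an element of `E` into `Tw p E`. -/
def Tw.mk {E : Type w} (x : E) : Tw p E := x

/-- Unwrap. -/
def Tw.out {p : ℕ} {E : Type w} (x : Tw p E) : E := x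

@[simp] lemma Tw.out_mk {E : Type w} (x : E) : (Tw.mk p x).out = x := rfl
@[simp] lemma Tw.mk_out {E : Type w} (x : Tw p E) : Tw.mk p x.out = x := rfl

variable (E : Type w) [Field E] [CharP E p]

instance : AddCommGroup (Tw p E) := inferInstanceAs (AddCommGroup E)

@[simp] lemma Tw.out_add (x y : Tw p E) : (x + y).out = x.out + y.out := rfl
@[simp] lemma Tw.out_zero : (0 : Tw p E).out = 0 := rfl
@[simp] lemma Tw.mk_add (x y : E) : Tw.mk p (x + y) = Tw.mk p x + Tw.mk p y := rfl

noncomputable instance : Module E (Tw p E) where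
  smul a x := Tw.mk p (a ^ p * x.out)
  one_smul x := by
    show Tw.mk p ((1:E) ^ p * x.out) = x
    rw [one_pow, one_mul, Tw.mk_out]
  mul_smul a b x := by
    show Tw.mk p ((a*b) ^ p * x.out) = Tw.mk p (a ^ p * (Tw.mk p (b ^ p * x.out)).out)
    rw [Tw.out_mk, mul_pow, mul_assoc]
  smul_zero a := by
    show Tw.mk p (a ^ p * (0 : Tw p E).out) = 0
    rw [Tw.out_zero, mul_zero]; rfl
  smul_add a x y := by
    show Tw.mk p (a ^ p * (x + y).out) = Tw.mk p (a ^ p * x.out) + Tw.mk p (a ^ p * y.out)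
    rw [Tw.out_add, mul_add, Tw.mk_add]
  add_smul a b x := by
    show Tw.mk p ((a + b) ^ p * x.out) = Tw.mk p (a ^ p * x.out) + Tw.mk p (b ^ p * x.out)
    rw [add_pow_char, add_mul, Tw.mk_add]
  zero_smul x := by
    show Tw.mk p ((0:E) ^ p * x.out) = 0
    rw [zero_pow (Fact.out : p.Prime).ne_zero, zero_mul]; rfl

lemma tw_smul (a : E) (x : Tw p E) : a • x = Tw.mk p (a ^ p * x.out) := rfl

variable {E}
variable {ι : Type*} [Fintype ι]

lemma Tw.mk_sum (f : ι → E) (s : Finset ι) :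
    Tw.mk p (∑ i ∈ s, f i) = ∑ i ∈ s, Tw.mk p (f i) := rfl

/-- The diagonal quasilinear form as an `E`-linear map into the twisted module. -/
noncomputable def formMap (c : ι → E) : (ι → E) →ₗ[E] Tw p E where
  toFun x := Tw.mk p (∑ i, c i * x i ^ p)
  map_add' x y := by
    rw [← Tw.mk_add]
    congr 1
    simp only [Pi.add_apply, add_pow_char, mul_add, Finset.sum_add_distrib]
  map_smul' a x := by
    show Tw.mk p (∑ i, c i * (a • x) i ^ p) = a • Tw.mk p (∑ i, c i * x i ^ p)
    rw [tw_smul, Tw.out_mk]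
    congr 1
    rw [Finset.mul_sum]
    apply Finset.sum_congr rfl
    intro i _
    rw [Pi.smul_apply, smul_eq_mul, mul_pow]; ring

lemma formMap_apply (c : ι → E) (x : ι → E) :
    (formMap p c x).out = ∑ i, c i * x i ^ p := rfl

lemma defect_eq_finrank_ker (c : ι → E) :
    defect p E c = Module.finrank E (LinearMap.ker (formMap p c)) := by
  unfold defect
  have h : Submodule.span E {x : ι → E | ∑ i, c i * x i ^ p = 0} = LinearMap.ker (formMap p c) := by
    have hset : {x : ι → E | ∑ i, c i * x i ^ p = 0} = (LinearMap.ker (formMap p c) : Set (ι → E)) := by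
      ext x
      change (∑ i, c i * x i ^ p = 0) ↔ formMap p c x = 0
      constructor
      · intro hx
        have h0 : (formMap p c x).out = (0 : Tw p E).out := by rw [formMap_apply, hx]; rfl
        calc formMap p c x = Tw.mk p (formMap p c x).out := (Tw.mk_out _ _).symm
          _ = Tw.mk p (0 : Tw p E).out := by rw [h0]
          _ = 0 := Tw.mk_out _ _
      · intro hx
        have h0 : (formMap p c x).out = 0 := by rw [hx]; rfl
        rwa [formMap_apply] at h0
    rw [hset, Submodule.span_eq]
  rw [h]

lemma mem_range_formMap_iff (c : ι → E) (y : E) :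
    Tw.mk p y ∈ LinearMap.range (formMap p c) ↔ y ∈ valueSet p E c := by
  constructor
  · rintro ⟨x, hx⟩
    exact ⟨x, by rw [← formMap_apply p c x, hx, Tw.out_mk]⟩
  · rintro ⟨x, rfl⟩
    exact ⟨x, rfl⟩

lemma formMap_single [DecidableEq ι] (c : ι → E) (i : ι) (z : E) :
    formMap p c (Pi.single i z) = Tw.mk p (c i * z ^ p) := by
  rw [← Tw.mk_out p (formMap p c (Pi.single i z))]
  congr 1
  rw [formMap_apply]
  rw [Finset.sum_eq_single i]
  · rw [Pi.single_eq_same]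
  · intro j _ hj
    rw [Pi.single_eq_of_ne hj, zero_pow (Fact.out : p.Prime).ne_zero, mul_zero]
  · intro h; exact absurd (Finset.mem_univ i) h

lemma rank_nullity (c : ι → E) :
    Module.finrank E (LinearMap.range (formMap p c)) +
      Module.finrank E (LinearMap.ker (formMap p c)) = Fintype.card ι := by
  rw [LinearMap.finrank_range_add_finrank_ker, Module.finrank_fintype_fun_eq_card]

lemma range_formMap_elim {ι' : Type*} [Fintype ι'] (c : ι → E) (c' : ι' → E) :
    LinearMap.range (formMap p (Sum.elim c c')) =
      LinearMap.range (formMap p c) ⊔ LinearMap.range (formMap p c') := by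
  apply le_antisymm
  · rintro _ ⟨x, rfl⟩
    have h : formMap p (Sum.elim c c') x =
        formMap p c (x ∘ Sum.inl) + formMap p c' (x ∘ Sum.inr) := by
      rw [← Tw.mk_out p (formMap p c (x ∘ Sum.inl)), ← Tw.mk_out p (formMap p c' (x ∘ Sum.inr)),
        ← Tw.mk_add, ← Tw.mk_out p (formMap p (Sum.elim c c') x)]
      congr 1
      simp only [formMap_apply, Fintype.sum_sum_type]
      rfl
    rw [h]
    exact Submodule.add_mem _ (Submodule.mem_sup_left ⟨_, rfl⟩)
      (Submodule.mem_sup_right ⟨_, rfl⟩)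
  · rw [sup_le_iff]
    constructor
    · rintro _ ⟨x, rfl⟩
      refine ⟨Sum.elim x 0, ?_⟩
      rw [← Tw.mk_out p (formMap p (Sum.elim c c') (Sum.elim x 0)), ← Tw.mk_out p (formMap p c x)]
      congr 1
      simp only [formMap_apply, Fintype.sum_sum_type]
      simp [zero_pow (Fact.out : p.Prime).ne_zero]
    · rintro _ ⟨x, rfl⟩
      refine ⟨Sum.elim 0 x, ?_⟩
      rw [← Tw.mk_out p (formMap p (Sum.elim c c') (Sum.elim 0 x)), ← Tw.mk_out p (formMap p c' x)]
      congr 1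
      simp only [formMap_apply, Fintype.sum_sum_type]
      simp [zero_pow (Fact.out : p.Prime).ne_zero]

/-- Multiplication by a nonzero `d` as a linear automorphism of the twisted module. -/
noncomputable def mulEquiv (d : E) (hd : d ≠ 0) : Tw p E ≃ₗ[E] Tw p E where
  toFun x := Tw.mk p (d * x.out)
  invFun x := Tw.mk p (d⁻¹ * x.out)
  map_add' x y := by
    show Tw.mk p (d * (x + y).out) = Tw.mk p (d * x.out) + Tw.mk p (d * y.out)
    rw [Tw.out_add, mul_add, Tw.mk_add]
  map_smul' a x := by
    show Tw.mk p (d * (Tw.mk p (a ^ p * x.out)).out) = a • Tw.mk p (d * x.out)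
    rw [tw_smul, Tw.out_mk, Tw.out_mk]
    congr 1; ring
  left_inv x := by
    show Tw.mk p (d⁻¹ * (Tw.mk p (d * x.out)).out) = x
    rw [Tw.out_mk, ← mul_assoc, inv_mul_cancel₀ hd, one_mul, Tw.mk_out]
  right_inv x := by
    show Tw.mk p (d * (Tw.mk p (d⁻¹ * x.out)).out) = x
    rw [Tw.out_mk, ← mul_assoc, mul_inv_cancel₀ hd, one_mul, Tw.mk_out]

lemma finrank_range_formMap_smul (d : E) (hd : d ≠ 0) (c : ι → E) :
    Module.finrank E (LinearMap.range (formMap p (fun i => d * c i))) =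
      Module.finrank E (LinearMap.range (formMap p c)) := by
  have h : formMap p (fun i => d * c i) =
      (mulEquiv p d hd).toLinearMap ∘ₗ formMap p c := by
    apply LinearMap.ext
    intro x
    show Tw.mk p (∑ i, (d * c i) * x i ^ p) = Tw.mk p (d * (formMap p c x).out)
    congr 1
    rw [formMap_apply, Finset.mul_sum]
    apply Finset.sum_congr rfl
    intro i _; ring
  rw [h, LinearMap.range_comp, LinearEquiv.finrank_map_eq]

end Aux

section Pfister

universe w
variable (p : ℕ) [Fact p.Prime] {E : Type w} [Field E] [CharP E p]
variable {n : ℕ} (a : Fin n → E)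

/-- Coefficients of the quasi-Pfister form. -/
noncomputable def pfC : (Fin n → Fin p) → E := fun i => ∏ r, a r ^ (i r : ℕ)

lemma pfC_mul_pfC (i j : Fin n → Fin p) :
    pfC p a i * pfC p a j =
      pfC p a (i + j) * (∏ r, a r ^ (((i r : ℕ) + (j r : ℕ)) / p)) ^ p := by
  unfold pfC
  rw [← Finset.prod_mul_distrib, ← Finset.prod_pow, ← Finset.prod_mul_distrib]
  apply Finset.prod_congr rfl
  intro r _
  rw [← pow_add, ← pow_mul, ← pow_add]
  congr 1
  have h : (((i + j) r : Fin p) : ℕ) = ((i r : ℕ) + (j r : ℕ)) % p := by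
    simp [Fin.add_def]
  rw [h, Nat.mul_comm]
  exact (Nat.mod_add_div _ _).symm

lemma term_mem (i j : Fin n → Fin p) (z : E) :
    Tw.mk p (pfC p a i * pfC p a j * z ^ p) ∈
      LinearMap.range (formMap p (pfC p a)) := by
  classical
  refine ⟨Pi.single (i + j) ((∏ r, a r ^ (((i r : ℕ) + (j r : ℕ)) / p)) * z), ?_⟩
  rw [formMap_single, pfC_mul_pfC p a i j]
  congr 1
  rw [mul_pow]
  ring

lemma pfC_mul_mem (i : Fin n → Fin p) {v : E}
    (hv : Tw.mk p v ∈ LinearMap.range (formMap p (pfC p a))) :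
    Tw.mk p (pfC p a i * v) ∈ LinearMap.range (formMap p (pfC p a)) := by
  obtain ⟨y, hy⟩ := hv
  have hy' : v = ∑ j, pfC p a j * y j ^ p := by
    rw [← formMap_apply p _ y, hy, Tw.out_mk]
  have h : Tw.mk p (pfC p a i * v) =
      ∑ j, Tw.mk p (pfC p a i * pfC p a j * (y j) ^ p) := by
    rw [← Tw.mk_sum]
    congr 1
    rw [hy', Finset.mul_sum]
    apply Finset.sum_congr rfl
    intro j _; ring
  rw [h]
  exact Submodule.sum_mem _ fun j _ => term_mem p a i j (y j)

lemma mul_mem_range_pfC {u v : E}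
    (hu : Tw.mk p u ∈ LinearMap.range (formMap p (pfC p a)))
    (hv : Tw.mk p v ∈ LinearMap.range (formMap p (pfC p a))) :
    Tw.mk p (u * v) ∈ LinearMap.range (formMap p (pfC p a)) := by
  obtain ⟨x, hx⟩ := hu
  have hx' : u = ∑ i, pfC p a i * x i ^ p := by
    rw [← formMap_apply p _ x, hx, Tw.out_mk]
  have h : Tw.mk p (u * v) = ∑ i, Tw.mk p (pfC p a i * ((x i) ^ p * v)) := by
    rw [← Tw.mk_sum]
    congr 1
    rw [hx', Finset.sum_mul]
    apply Finset.sum_congr rfl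
    intro i _; ring
  rw [h]
  refine Submodule.sum_mem _ fun i _ => ?_
  refine pfC_mul_mem p a i ?_
  have h2 : Tw.mk p ((x i) ^ p * v) = (x i) • Tw.mk p v := by
    rw [tw_smul, Tw.out_mk]
  rw [h2]
  exact Submodule.smul_mem _ _ hv

end Pfister



/-- If `φ = π ⊥ dσ` is anisotropic with `σ` a subform of the quasi-Pfister form `π`, and
`d ∉ D_E(π)`, then `i_d(φ_E) = i_d(π_E) + i_d(σ_E)`. -/
theorem defect_pfister_add_subform_of_not_mem (p : ℕ) [Fact p.Prime]
    (F : Type u) [Field F] [CharP F p]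
    (n : ℕ) (a : Fin n → F) (t : ℕ) (ht : 1 ≤ t) (s : Fin t → F)
    (hs : ∀ j, s j ∈ valueSet p F (fun i : Fin n → Fin p => ∏ r, a r ^ (i r : ℕ)))
    (d : F) (hd : d ≠ 0)
    (hφ : Anisotropic p F (Sum.elim (fun i : Fin n → Fin p => ∏ r, a r ^ (i r : ℕ))
      (fun j : Fin t => d * s j)))
    (E : Type v) [Field E] [Algebra F E]
    (hdE : algebraMap F E d ∉ valueSet p E
      (fun i : Fin n → Fin p => algebraMap F E (∏ r, a r ^ (i r : ℕ)))) :
    defect p E (fun j => algebraMap F E (Sum.elim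
        (fun i : Fin n → Fin p => ∏ r, a r ^ (i r : ℕ)) (fun j : Fin t => d * s j) j)) =
      defect p E (fun i : Fin n → Fin p => algebraMap F E (∏ r, a r ^ (i r : ℕ))) +
        defect p E (fun j : Fin t => algebraMap F E (s j)) := by
  haveI : CharP E p := charP_of_injective_algebraMap (algebraMap F E).injective p
  classical
  set a' : Fin n → E := fun r => algebraMap F E (a r) with ha'
  have hπ : (fun i : Fin n → Fin p => algebraMap F E (∏ r, a r ^ (i r : ℕ))) = pfC p a' := by
    funext i; simp [pfC, map_prod, map_pow, ha']
  set d' : E := algebraMap F E d with hd'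
  set s' : Fin t → E := fun j => algebraMap F E (s j) with hs'
  have hφcoef : (fun j => algebraMap F E (Sum.elim
      (fun i : Fin n → Fin p => ∏ r, a r ^ (i r : ℕ)) (fun j : Fin t => d * s j) j))
      = Sum.elim (pfC p a') (fun j => d' * s' j) := by
    funext j
    cases j with
    | inl i => simp [pfC, map_prod, map_pow, ha']
    | inr j => simp [map_mul, hd', hs']
  rw [hφcoef, hπ] at *
  rw [hπ] at hdE
  rw [defect_eq_finrank_ker, defect_eq_finrank_ker, defect_eq_finrank_ker]
  have rnφ := rank_nullity p (Sum.elim (pfC p a') (fun j => d' * s' j))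
  have rnπ := rank_nullity p (pfC p a')
  have rnσ := rank_nullity p s'
  have hrange := range_formMap_elim p (pfC p a') (fun j => d' * s' j)
  have hd'0 : d' ≠ 0 := fun h => hd (by
    apply (algebraMap F E).injective
    rw [map_zero, ← hd']; exact h)
  have hs'mem : ∀ j, Tw.mk p (s' j) ∈ LinearMap.range (formMap p (pfC p a')) := by
    intro j
    obtain ⟨x, hx⟩ := hs j
    rw [mem_range_formMap_iff]
    refine ⟨fun i => algebraMap F E (x i), ?_⟩
    rw [hs']
    simp only [hx, map_sum, map_mul, map_pow, map_prod, pfC, ha']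
  -- the two ranges intersect trivially
  have hinf : LinearMap.range (formMap p (pfC p a')) ⊓
      LinearMap.range (formMap p (fun j => d' * s' j)) = ⊥ := by
    rw [eq_bot_iff]
    rintro u ⟨huπ, y, hy⟩
    set cval : E := ∑ j, s' j * y j ^ p with hc
    have hu : u = Tw.mk p (d' * cval) := by
      rw [← hy, ← Tw.mk_out p (formMap p (fun j => d' * s' j) y)]
      congr 1
      rw [formMap_apply, hc, Finset.mul_sum]
      apply Finset.sum_congr rfl
      intro j _; ring
    have hcval : Tw.mk p cval ∈ LinearMap.range (formMap p (pfC p a')) := by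
      rw [hc, Tw.mk_sum]
      refine Submodule.sum_mem _ fun j _ => ?_
      have h2 : Tw.mk p (s' j * y j ^ p) = (y j) • Tw.mk p (s' j) := by
        rw [tw_smul, Tw.out_mk, mul_comm]
      rw [h2]
      exact Submodule.smul_mem _ _ (hs'mem j)
    by_cases hc0 : cval = 0
    · have : u = 0 := by rw [hu, hc0, mul_zero]; rfl
      simp [this]
    · exfalso
      apply hdE
      rw [← mem_range_formMap_iff]
      have hk : ∀ k : ℕ, Tw.mk p (d' * cval * cval ^ k) ∈
          LinearMap.range (formMap p (pfC p a')) := by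
        intro k
        induction k with
        | zero => simpa using (hu ▸ huπ)
        | succ k ih =>
          have h3 := mul_mem_range_pfC p a' ih hcval
          have h4 : d' * cval * cval ^ k * cval = d' * cval * cval ^ (k + 1) := by
            rw [pow_succ]; ring
          rwa [h4] at h3
      have e : Tw.mk p d' = (cval⁻¹) • Tw.mk p (d' * cval * cval ^ (p - 1)) := by
        rw [tw_smul, Tw.out_mk]
        congr 1
        have hp1 : p - 1 + 1 = p := Nat.succ_pred_eq_of_pos (Fact.out : p.Prime).pos
        have h5 : d' * cval * cval ^ (p - 1) = d' * cval ^ p := by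
          rw [mul_assoc, ← pow_succ', hp1]
        rw [h5, mul_comm d' (cval ^ p), inv_pow, inv_mul_cancel_left₀ (pow_ne_zero _ hc0)]
      rw [e]
      exact Submodule.smul_mem _ _ (hk (p - 1))
  have hsup := Submodule.finrank_sup_add_finrank_inf_eq
    (LinearMap.range (formMap p (pfC p a'))) (LinearMap.range (formMap p (fun j => d' * s' j)))
  rw [hinf, finrank_bot, Nat.add_zero] at hsup
  have hds := finrank_range_formMap_smul p d' hd'0 s'
  rw [hrange] at rnφ
  have hcard : Fintype.card ((Fin n → Fin p) ⊕ Fin t) =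
      Fintype.card (Fin n → Fin p) + t := by simp
  rw [hcard] at rnφ
  have hcardσ : Fintype.card (Fin t) = t := by simp
  rw [hcardσ] at rnσ
  omega
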